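/- For every ε ∈ {1,−1} and every q ∈ ℂ, ∑_{π ∈ G*_{r,n}} ε^{inv(|π|)} q^{Dmaj(π)} = (∏_{j=1}^{n−1} [j·r]_{ε^{j−1} q}) · [n]_{ε^{n−1} q}. -/

import Mathlib

open Finset

open scoped Classical

/-- `Flt x y` means `x <_F y` in the order on colored integers:
`(a,s) <_F (b,t)` iff `s > t`, or `s = t` and `a < b`. -/
def Flt (x y : ℕ × ℕ) : Prop := y.2 < x.2 ∨ (x.2 = y.2 ∧ x.1 < y.1)

instance (x y : ℕ × ℕ) : Decidable (Flt x y) := by unfold Flt; infer_instance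

/-- Inversion number of a list of naturals. -/
def invNum (l : List ℕ) : ℕ :=
  ∑ i ∈ Finset.range l.length, ∑ j ∈ Finset.range l.length,
    if i < j ∧ l.getD j 0 < l.getD i 0 then 1 else 0

/-- Sum of the colors of a colored word. -/
def colSum (l : List (ℕ × ℕ)) : ℕ := (l.map Prod.snd).sum

/-- The major index `maj_F` of a colored word: the sum of the
(1-indexed) positions `i` with `l_i >_F l_{i+1}`. -/
def majF (l : List (ℕ × ℕ)) : ℕ :=
  ∑ i ∈ Finset.range (l.length - 1),
    if Flt (l.getD (i + 1) (0, 0)) (l.getD i (0, 0)) then i + 1 else 0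

/-- The flag major index `fmaj = r·maj_F + col`. -/
def fmaj (r : ℕ) (l : List (ℕ × ℕ)) : ℕ := r * majF l + colSum l

/-- The list of absolute values of a colored word. -/
def absList (l : List (ℕ × ℕ)) : List ℕ := l.map Prod.fst

/-- The one-dimensional character value `χ_{ε,h}` of a colored word:
`ε^{inv(|W|)} · ζ^{h·col(W)}`. -/
noncomputable def chi (ε ζ : ℂ) (h : ℕ) (l : List (ℕ × ℕ)) : ℂ :=
  ε ^ invNum (absList l) * ζ ^ (h * colSum l)

/-- `[m]_x = 1 + x + ⋯ + x^{m-1}`. -/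
noncomputable def qnum (m : ℕ) (x : ℂ) : ℂ := ∑ i ∈ Finset.range m, x ^ i

/-- Colored permutations in `G_{r,n}`: a permutation of `Fin n` together with
a color in `Fin r` at each position. -/
abbrev GP (r n : ℕ) := Equiv.Perm (Fin n) × (Fin n → Fin r)

/-- The window notation of a colored permutation: the colored word whose `i`-th
entry is the value `π.1 i` (shifted to lie in `{1,…,n}`) with color `π.2 i`. -/
def window {r n : ℕ} (π : GP r n) : List (ℕ × ℕ) :=
  (List.finRange n).map fun i => ((π.1 i : ℕ) + 1, (π.2 i : ℕ))

/-- The window of `π` with the color of its last entry replaced by `0`;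
`Dmaj(π) = fmaj` of this word. -/
def windowD {r n : ℕ} (π : GP r n) : List (ℕ × ℕ) :=
  (List.finRange n).map fun i =>
    ((π.1 i : ℕ) + 1, if (i : ℕ) = n - 1 then 0 else (π.2 i : ℕ))

lemma epow_even (ε : ℂ) (hsq : ε * ε = 1) (k : ℕ) (hk : Even k) : ε ^ k = 1 := by
  obtain ⟨c, hc⟩ := hk
  rw [hc, ← two_mul, pow_mul, sq, hsq, one_pow]

lemma qnum_mul (a b : ℕ) (x : ℂ) : qnum (a * b) x = qnum a x * qnum b (x ^ a) := by
  induction b with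
  | zero => simp [qnum]
  | succ b ih =>
    have h1 : qnum (b+1) (x^a) = qnum b (x^a) + (x^a)^b := by
      rw [qnum, qnum, sum_range_succ]
    rw [Nat.mul_succ, qnum, Finset.sum_range_add, ← qnum, ih, h1, mul_add]
    congr 1
    unfold qnum
    rw [Finset.sum_mul]
    apply Finset.sum_congr rfl
    intro i _
    rw [← pow_mul, ← pow_add, add_comm (a*b) i, add_comm i (a*b)]

lemma rank_lt (T : Finset ℕ) {s s' : ℕ} (hs : s ∈ T) (hs' : s' ∈ T) (h : s < s') :
    (T.filter (fun u => s' < u)).card < (T.filter (fun u => s < u)).card := by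
  apply card_lt_card
  constructor
  · intro u hu; simp only [mem_filter] at hu ⊢; exact ⟨hu.1, by omega⟩
  · intro hsub
    have h1 : s' ∈ T.filter (fun u => s < u) := by simp [mem_filter, hs', h]
    have h2 := hsub h1
    simp [mem_filter] at h2

lemma rank_sum (T : Finset ℕ) (g : ℕ → ℂ) :
    ∑ s ∈ T, g ((T.filter (fun u => s < u)).card) = ∑ c ∈ range T.card, g c := by
  have hinj : Set.InjOn (fun s => (T.filter (fun u => s < u)).card) ↑T := by
    intro s hs s' hs' h
    simp only at h
    have hs1 : s ∈ T := hs
    have hs2 : s' ∈ T := hs'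
    rcases lt_trichotomy s s' with hlt | heq | hgt
    · have := rank_lt T hs1 hs2 hlt; omega
    · exact heq
    · have := rank_lt T hs2 hs1 hgt; omega
  apply Finset.sum_nbij (fun s => (T.filter (fun u => s < u)).card)
  · intro s hs
    simp only [mem_range]
    calc (T.filter (fun u => s < u)).card ≤ (T.erase s).card := by
          apply card_le_card; intro u hu
          simp only [mem_filter] at hu
          exact mem_erase.2 ⟨by omega, hu.1⟩
      _ < T.card := by
          have := Finset.card_pos.2 ⟨s, hs⟩
          rw [card_erase_of_mem hs]; omega
  · exact hinj
  · have himg : T.image (fun s => (T.filter (fun u => s < u)).card) = range T.card := by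
      apply eq_of_subset_of_card_le
      · intro c hc
        simp only [mem_image] at hc
        obtain ⟨s, hs, rfl⟩ := hc
        simp only [mem_range]
        calc (T.filter (fun u => s < u)).card ≤ (T.erase s).card := by
              apply card_le_card; intro u hu
              simp only [mem_filter] at hu
              exact mem_erase.2 ⟨by omega, hu.1⟩
          _ < T.card := by
              have := Finset.card_pos.2 ⟨s, hs⟩
              rw [card_erase_of_mem hs]; omega
      · rw [card_range, Finset.card_image_of_injOn hinj]
    intro c hc
    rw [← Finset.coe_image, himg]
    exact hc
  · intro s hs; rfl

/-- extension of a `Fin`-word to `ℕ` -/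
def wext {m : ℕ} (w : Fin m → ℕ) : ℕ → ℕ := fun i => if h : i < m then w ⟨i, h⟩ else 0

def winv (m : ℕ) (w : ℕ → ℕ) : ℕ :=
  ∑ i ∈ range m, ∑ j ∈ range m, if i < j ∧ w j < w i then 1 else 0

def wmaj (m : ℕ) (w : ℕ → ℕ) : ℕ :=
  ∑ i ∈ range (m - 1), if w (i + 1) < w i then i + 1 else 0

noncomputable def WS (m : ℕ) (S : Finset ℕ) : Finset (Fin m → ℕ) :=
  (Fintype.piFinset fun _ => S).filter Function.Injective

lemma mem_WS {m : ℕ} {S : Finset ℕ} {w : Fin m → ℕ} :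
    w ∈ WS m S ↔ (∀ i, w i ∈ S) ∧ Function.Injective w := by
  simp [WS, Fintype.mem_piFinset]

lemma winv_congr (m : ℕ) (w w' : ℕ → ℕ) (h : ∀ i < m, w i = w' i) :
    winv m w = winv m w' := by
  unfold winv
  apply Finset.sum_congr rfl
  intro i hi
  apply Finset.sum_congr rfl
  intro j hj
  rw [h i (mem_range.1 hi), h j (mem_range.1 hj)]

lemma wmaj_congr (m : ℕ) (w w' : ℕ → ℕ) (h : ∀ i < m, w i = w' i) :
    wmaj m w = wmaj m w' := by
  unfold wmaj
  apply Finset.sum_congr rfl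
  intro i hi
  have hi' := mem_range.1 hi
  rw [h i (by omega), h (i+1) (by omega)]

lemma winv_succ (m : ℕ) (w : ℕ → ℕ) :
    winv (m + 1) w = winv m w + ∑ i ∈ range m, if w m < w i then 1 else 0 := by
  unfold winv
  rw [sum_range_succ]
  have h1 : ∀ i ∈ range m, (∑ j ∈ range (m+1), if i < j ∧ w j < w i then 1 else 0)
      = (∑ j ∈ range m, if i < j ∧ w j < w i then 1 else 0)
        + (if w m < w i then 1 else 0) := by
    intro i hi
    rw [sum_range_succ]
    congr 1
    have : i < m := mem_range.1 hi
    simp [this]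
  rw [Finset.sum_congr rfl h1, Finset.sum_add_distrib]
  have h2 : (∑ j ∈ range (m+1), if m < j ∧ w j < w m then 1 else 0) = 0 := by
    apply Finset.sum_eq_zero
    intro j hj
    have : j < m + 1 := mem_range.1 hj
    have : ¬ (m < j ∧ w j < w m) := by omega
    simp [this]
  rw [h2]
  ring

lemma wmaj_succ (m : ℕ) (hm : 1 ≤ m) (w : ℕ → ℕ) :
    wmaj (m + 1) w = wmaj m w + if w m < w (m - 1) then m else 0 := by
  unfold wmaj
  have h : m + 1 - 1 = (m - 1) + 1 := by omega
  rw [h, sum_range_succ]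
  congr 2 <;> rw [show m - 1 + 1 = m by omega]

lemma wext_snoc_lt {m : ℕ} (w' : Fin m → ℕ) (t : ℕ) (i : ℕ) (h : i < m) :
    wext (Fin.snoc w' t) i = wext w' i := by
  unfold wext
  rw [dif_pos (by omega : i < m + 1), dif_pos h]
  have : (⟨i, by omega⟩ : Fin (m+1)) = Fin.castSucc ⟨i, h⟩ := rfl
  rw [this, Fin.snoc_castSucc]

lemma wext_snoc_last {m : ℕ} (w' : Fin m → ℕ) (t : ℕ) :
    wext (Fin.snoc w' t) m = t := by
  unfold wext
  rw [dif_pos (by omega : m < m + 1)]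
  have : (⟨m, by omega⟩ : Fin (m+1)) = Fin.last m := rfl
  rw [this, Fin.snoc_last]

lemma winv_ext_snoc (m : ℕ) (w' : Fin m → ℕ) (t : ℕ) :
    winv (m + 1) (wext (Fin.snoc w' t))
      = winv m (wext w') + ∑ i ∈ range m, if t < wext w' i then 1 else 0 := by
  rw [winv_succ]
  congr 1
  · exact winv_congr _ _ _ (fun i hi => wext_snoc_lt w' t i hi)
  · apply Finset.sum_congr rfl
    intro i hi
    rw [wext_snoc_last, wext_snoc_lt w' t i (mem_range.1 hi)]

lemma wmaj_ext_snoc (m : ℕ) (hm : 1 ≤ m) (w' : Fin m → ℕ) (t : ℕ) :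
    wmaj (m + 1) (wext (Fin.snoc w' t))
      = wmaj m (wext w') + if t < wext w' (m - 1) then m else 0 := by
  rw [wmaj_succ m hm]
  congr 1
  · exact wmaj_congr _ _ _ (fun i hi => wext_snoc_lt w' t i hi)
  · rw [wext_snoc_last, wext_snoc_lt w' t (m-1) (by omega)]

lemma count_lt_eq {m : ℕ} {S : Finset ℕ} (w : Fin m → ℕ) (hw : w ∈ WS m S)
    (hcard : S.card = m) (t : ℕ) :
    (∑ i ∈ range m, if t < wext w i then 1 else 0) = (S.filter (fun u => t < u)).card := by
  obtain ⟨hmem, hinj⟩ := mem_WS.1 hw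
  have himg : Finset.image w univ = S := by
    apply eq_of_subset_of_card_le
    · intro u hu
      obtain ⟨i, _, rfl⟩ := mem_image.1 hu
      exact hmem i
    · rw [hcard, Finset.card_image_of_injective _ hinj, card_univ, Fintype.card_fin]
  have h1 : (∑ i ∈ range m, if t < wext w i then 1 else 0)
      = ∑ i : Fin m, if t < w i then 1 else 0 := by
    rw [← Fin.sum_univ_eq_sum_range (fun i => if t < wext w i then 1 else 0) m]
    apply Finset.sum_congr rfl
    intro i _
    unfold wext
    rw [dif_pos i.isLt]
  rw [h1, Finset.sum_boole]
  rw [← himg, Finset.filter_image, Finset.card_image_of_injective _ hinj]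
  rfl

lemma qnum_add (a b : ℕ) (x : ℂ) : qnum (a + b) x = qnum a x + x ^ a * qnum b x := by
  unfold qnum
  rw [Finset.sum_range_add, Finset.mul_sum]
  congr 1
  apply Finset.sum_congr rfl
  intro i _
  rw [pow_add]

lemma key_alg (ε q : ℂ) (hsq : ε * ε = 1) (m K : ℕ) (hK : K ≤ m + 1) :
    ε ^ K * (q ^ (m+1) * qnum K (ε^m * q) + (ε^m * q) ^ K * qnum (m+1-K) (ε^m * q))
      = (ε^(m+1) * q) ^ K * qnum (m+1) (ε^m * q) := by
  have hsplit : qnum (m+1) (ε^m*q)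
      = qnum (m+1-K) (ε^m*q) + (ε^m*q)^(m+1-K) * qnum K (ε^m*q) := by
    rw [← qnum_add]
    congr 1
    omega
  rw [hsplit, mul_add, mul_add]
  have e1 : ε ^ K * ((ε^m * q) ^ K * qnum (m+1-K) (ε^m * q))
      = (ε^(m+1) * q) ^ K * qnum (m+1-K) (ε^m * q) := by
    rw [mul_pow, mul_pow, ← pow_mul, ← mul_assoc, ← mul_assoc]
    congr 2
    rw [← pow_add, ← pow_mul]
    congr 1
    ring
  have hε : ε ^ ((m+1)*K) * ε ^ (m * (m+1-K)) = ε ^ K := by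
    rw [← pow_add]
    have hexp : (m+1)*K + m * (m+1-K) = K + m * (m+1) := by
      have h2 : m * K + m * (m+1-K) = m * (m+1) := by
        rw [← Nat.mul_add]
        congr 1
        omega
      have h3 : (m+1)*K = K + m*K := by ring
      omega
    rw [hexp, pow_add, epow_even ε hsq (m*(m+1)) (Nat.even_mul_succ_self m), mul_one]
  have hq : q ^ K * q ^ (m+1-K) = q ^ (m+1) := by
    rw [← pow_add]
    congr 1
    omega
  have e2 : ε ^ K * (q ^ (m+1) * qnum K (ε^m * q))
      = (ε^(m+1) * q) ^ K * ((ε^m * q) ^ (m+1-K) * qnum K (ε^m * q)) := by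
    rw [mul_pow, mul_pow, ← pow_mul, ← pow_mul, ← hε, ← hq]
    ring
  rw [e1, e2]
  ring

lemma mahonian_refined (ε q : ℂ) (hsq : ε * ε = 1) :
    ∀ m : ℕ, ∀ S : Finset ℕ, S.card = m + 1 → ∀ t ∈ S,
    ∑ w ∈ (WS (m+1) S).filter (fun w => w (Fin.last m) = t),
        ε ^ winv (m+1) (wext w) * q ^ wmaj (m+1) (wext w)
      = (ε ^ m * q) ^ ((S.filter (fun u => t < u)).card)
        * ∏ j ∈ range m, qnum (j+1) (ε ^ j * q) := by
  intro m
  induction m with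
  | zero =>
    intro S hS t ht
    have hSt : S = {t} := by
      obtain ⟨a, ha⟩ := Finset.card_eq_one.1 hS
      subst ha
      rw [Finset.mem_singleton.1 ht]
    subst hSt
    have hset : (WS 1 {t}).filter (fun w => w (Fin.last 0) = t) = {fun _ => t} := by
      ext w
      simp only [mem_filter, mem_WS, Finset.mem_singleton]
      constructor
      · rintro ⟨⟨hmem, -⟩, -⟩
        funext i
        exact hmem i
      · rintro rfl
        exact ⟨⟨fun _ => rfl, fun a b _ => Subsingleton.elim a b⟩, rfl⟩
    rw [hset, Finset.sum_singleton]
    have h1 : (Finset.filter (fun u => t < u) {t}) = ∅ := by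
      rw [Finset.filter_singleton, if_neg (lt_irrefl t)]
    have hwi : winv 1 (wext (fun _ : Fin 1 => t)) = 0 := by
      unfold winv
      rw [Finset.sum_range_one, Finset.sum_range_one]
      simp
    have hwm : wmaj 1 (wext (fun _ : Fin 1 => t)) = 0 := by
      unfold wmaj
      simp
    rw [hwi, hwm, h1]
    simp
  | succ m ih =>
    intro S hS t ht
    set S' := S.erase t with hS'def
    have hS' : S'.card = m + 1 := by rw [hS'def, card_erase_of_mem ht]; omega
    set K := (S.filter (fun u => t < u)).card with hKdef
    have heq : S'.filter (fun u => t < u) = S.filter (fun u => t < u) := by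
      ext u
      simp only [hS'def, mem_filter, mem_erase]
      constructor
      · rintro ⟨⟨-, h1⟩, h2⟩; exact ⟨h1, h2⟩
      · rintro ⟨h1, h2⟩; exact ⟨⟨by omega, h1⟩, h2⟩
    -- step 1 : strip the last letter
    have step1 :
        ∑ w ∈ (WS (m+2) S).filter (fun w => w (Fin.last (m+1)) = t),
            ε ^ winv (m+2) (wext w) * q ^ wmaj (m+2) (wext w)
        = ∑ w' ∈ WS (m+1) S',
            ε ^ (winv (m+1) (wext w') + K)
              * q ^ (wmaj (m+1) (wext w') + if t < w' (Fin.last m) then m+1 else 0) := by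
      apply Finset.sum_nbij' (i := fun w => w ∘ Fin.castSucc) (j := fun w' => Fin.snoc w' t)
      · intro w hw
        obtain ⟨hw1, hw2⟩ := Finset.mem_filter.1 hw
        obtain ⟨hmem, hinj⟩ := mem_WS.1 hw1
        rw [mem_WS]
        constructor
        · intro i
          rw [hS'def, mem_erase]
          refine ⟨?_, hmem _⟩
          intro hcontra
          have : (Fin.castSucc i) = Fin.last (m+1) :=
            hinj ((show w i.castSucc = t from hcontra).trans hw2.symm)
          exact absurd this (Fin.castSucc_lt_last i).ne
        · exact hinj.comp (Fin.castSucc_injective _)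
      · intro w' hw'
        obtain ⟨hmem, hinj⟩ := mem_WS.1 hw'
        rw [Finset.mem_filter, mem_WS]
        refine ⟨⟨?_, ?_⟩, Fin.snoc_last _ _⟩
        · intro i
          rcases Fin.eq_castSucc_or_eq_last i with ⟨j, rfl⟩ | rfl
          · rw [Fin.snoc_castSucc]
            exact Finset.mem_of_mem_erase (hmem j)
          · rw [Fin.snoc_last]; exact ht
        · intro a b hab
          rcases Fin.eq_castSucc_or_eq_last a with ⟨a', rfl⟩ | rfl <;>
            rcases Fin.eq_castSucc_or_eq_last b with ⟨b', rfl⟩ | rfl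
          · rw [Fin.snoc_castSucc, Fin.snoc_castSucc] at hab
            rw [hinj hab]
          · rw [Fin.snoc_castSucc, Fin.snoc_last] at hab
            have := hmem a'
            rw [hS'def, mem_erase] at this
            exact absurd hab this.1
          · rw [Fin.snoc_last, Fin.snoc_castSucc] at hab
            have := hmem b'
            rw [hS'def, mem_erase] at this
            exact absurd hab.symm this.1
          · rfl
      · intro w hw
        obtain ⟨-, hw2⟩ := Finset.mem_filter.1 hw
        funext i
        rcases Fin.eq_castSucc_or_eq_last i with ⟨i', rfl⟩ | rfl
        · simp [Fin.snoc_castSucc]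
        · rw [Fin.snoc_last, hw2]
      · intro w' _
        funext i
        simp [Fin.snoc_castSucc]
      · intro w hw
        obtain ⟨hw1, hw2⟩ := Finset.mem_filter.1 hw
        have hwsnoc : w = Fin.snoc (w ∘ Fin.castSucc) t := by
          funext i
          rcases Fin.eq_castSucc_or_eq_last i with ⟨i', rfl⟩ | rfl
          · simp [Fin.snoc_castSucc]
          · rw [Fin.snoc_last, hw2]
        have hmem' : (w ∘ Fin.castSucc) ∈ WS (m+1) S' := by
          obtain ⟨hmem, hinj⟩ := mem_WS.1 hw1
          rw [mem_WS]
          constructor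
          · intro i
            rw [hS'def, mem_erase]
            refine ⟨?_, hmem _⟩
            intro hcontra
            have : (Fin.castSucc i) = Fin.last (m+1) :=
              hinj ((show w i.castSucc = t from hcontra).trans hw2.symm)
            exact absurd this (Fin.castSucc_lt_last i).ne
          · exact hinj.comp (Fin.castSucc_injective _)
        have hcnt : (∑ i ∈ range (m+1), if t < wext (w ∘ Fin.castSucc) i then 1 else 0) = K := by
          rw [count_lt_eq (w ∘ Fin.castSucc) hmem' hS' t, heq]
        have hlast : wext (w ∘ Fin.castSucc) (m+1-1) = (w ∘ Fin.castSucc) (Fin.last m) := by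
          unfold wext
          rw [dif_pos (by omega : m+1-1 < m+1)]
          congr 1
        conv_lhs => rw [hwsnoc]
        rw [winv_ext_snoc, wmaj_ext_snoc (m+1) (by omega), hcnt, hlast]
    rw [step1]
    -- step 2 : fiber by the (new) last letter
    have hmaps : ∀ w' ∈ WS (m+1) S', w' (Fin.last m) ∈ S' :=
      fun w' hw' => (mem_WS.1 hw').1 _
    rw [← Finset.sum_fiberwise_of_maps_to hmaps]
    have step2 : ∀ s ∈ S',
        ∑ w' ∈ (WS (m+1) S').filter (fun w' => w' (Fin.last m) = s),
          ε ^ (winv (m+1) (wext w') + K)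
            * q ^ (wmaj (m+1) (wext w') + if t < w' (Fin.last m) then m+1 else 0)
        = ε ^ K * (if t < s then q^(m+1) else 1)
            * ((ε ^ m * q) ^ ((S'.filter (fun u => s < u)).card)
                * ∏ j ∈ range m, qnum (j+1) (ε ^ j * q)) := by
      intro s hs
      have : ∀ w' ∈ (WS (m+1) S').filter (fun w' => w' (Fin.last m) = s),
          ε ^ (winv (m+1) (wext w') + K)
            * q ^ (wmaj (m+1) (wext w') + if t < w' (Fin.last m) then m+1 else 0)
          = (ε ^ K * (if t < s then q^(m+1) else 1))
              * (ε ^ winv (m+1) (wext w') * q ^ wmaj (m+1) (wext w')) := by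
        intro w' hw'
        have hl : w' (Fin.last m) = s := (Finset.mem_filter.1 hw').2
        rw [hl, pow_add, pow_add]
        by_cases h : t < s
        · simp only [if_pos h]
          ring
        · simp only [if_neg h, pow_zero]
          ring
      rw [Finset.sum_congr rfl this, ← Finset.mul_sum, ih S' hS' s hs]
    rw [Finset.sum_congr rfl step2]
    -- step 3 : split S' by comparison with t and use the rank bijection
    rw [← Finset.sum_filter_add_sum_filter_not S' (fun s => t < s)]
    have hTcard : (S'.filter (fun s => t < s)).card = K := by rw [heq]
    have hT : ∀ s ∈ S'.filter (fun s => t < s),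
        (S'.filter (fun u => s < u)) = (S'.filter (fun s => t < s)).filter (fun u => s < u) := by
      intro s hs
      obtain ⟨hs1, hs2⟩ := Finset.mem_filter.1 hs
      ext u
      simp only [mem_filter]
      constructor
      · rintro ⟨h1, h2⟩; exact ⟨⟨h1, by omega⟩, h2⟩
      · rintro ⟨⟨h1, -⟩, h2⟩; exact ⟨h1, h2⟩
    have hB : ∀ s ∈ S'.filter (fun s => ¬ t < s),
        (S'.filter (fun u => s < u)).card
          = K + ((S'.filter (fun s => ¬ t < s)).filter (fun u => s < u)).card := by
      intro s hs
      obtain ⟨hs1, hs2⟩ := Finset.mem_filter.1 hs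
      have hst : s < t := by
        have : s ≠ t := by
          rw [hS'def, mem_erase] at hs1; exact hs1.1
        omega
      have hsplit : S'.filter (fun u => s < u)
          = (S'.filter (fun s => t < s)) ∪ ((S'.filter (fun s => ¬ t < s)).filter (fun u => s < u)) := by
        ext u
        simp only [mem_filter, Finset.mem_union]
        constructor
        · rintro ⟨h1, h2⟩
          by_cases h : t < u
          · exact Or.inl ⟨h1, h⟩
          · exact Or.inr ⟨⟨h1, h⟩, h2⟩
        · rintro (⟨h1, h2⟩ | ⟨⟨h1, -⟩, h2⟩)
          · exact ⟨h1, by omega⟩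
          · exact ⟨h1, h2⟩
      have hd : Disjoint (S'.filter (fun s => t < s))
          ((S'.filter (fun s => ¬ t < s)).filter (fun u => s < u)) := by
        apply Finset.disjoint_left.2
        intro u hu1 hu2
        exact (Finset.mem_filter.1 (Finset.mem_filter.1 hu2).1).2 (Finset.mem_filter.1 hu1).2
      rw [hsplit, Finset.card_union_of_disjoint hd, hTcard]
    have hBcard : (S'.filter (fun s => ¬ t < s)).card = m + 1 - K := by
      have := Finset.card_filter_add_card_filter_not (s := S') (p := fun s => t < s)
      omega
    -- T part
    have hTsum : ∑ s ∈ S'.filter (fun s => t < s),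
        ε ^ K * (if t < s then q^(m+1) else 1)
          * ((ε ^ m * q) ^ ((S'.filter (fun u => s < u)).card)
              * ∏ j ∈ range m, qnum (j+1) (ε ^ j * q))
        = ε ^ K * q^(m+1) * qnum K (ε^m * q) * ∏ j ∈ range m, qnum (j+1) (ε ^ j * q) := by
      have : ∀ s ∈ S'.filter (fun s => t < s),
          ε ^ K * (if t < s then q^(m+1) else 1)
            * ((ε ^ m * q) ^ ((S'.filter (fun u => s < u)).card)
                * ∏ j ∈ range m, qnum (j+1) (ε ^ j * q))
          = (ε ^ K * q^(m+1) * ∏ j ∈ range m, qnum (j+1) (ε ^ j * q))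
              * (ε ^ m * q) ^ (((S'.filter (fun s => t < s)).filter (fun u => s < u)).card) := by
        intro s hs
        have h2 := (Finset.mem_filter.1 hs).2
        rw [if_pos h2, hT s hs]
        ring
      rw [Finset.sum_congr rfl this, ← Finset.mul_sum,
        rank_sum (S'.filter (fun s => t < s)) (fun c => (ε^m * q)^c), hTcard]
      unfold qnum
      ring
    -- B part
    have hBsum : ∑ s ∈ S'.filter (fun s => ¬ t < s),
        ε ^ K * (if t < s then q^(m+1) else 1)
          * ((ε ^ m * q) ^ ((S'.filter (fun u => s < u)).card)
              * ∏ j ∈ range m, qnum (j+1) (ε ^ j * q))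
        = ε ^ K * (ε^m*q)^K * qnum (m+1-K) (ε^m * q) * ∏ j ∈ range m, qnum (j+1) (ε ^ j * q) := by
      have : ∀ s ∈ S'.filter (fun s => ¬ t < s),
          ε ^ K * (if t < s then q^(m+1) else 1)
            * ((ε ^ m * q) ^ ((S'.filter (fun u => s < u)).card)
                * ∏ j ∈ range m, qnum (j+1) (ε ^ j * q))
          = (ε ^ K * (ε^m*q)^K * ∏ j ∈ range m, qnum (j+1) (ε ^ j * q))
              * (ε ^ m * q) ^ (((S'.filter (fun s => ¬ t < s)).filter (fun u => s < u)).card) := by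
        intro s hs
        have h2 := (Finset.mem_filter.1 hs).2
        rw [if_neg h2, hB s hs, pow_add]
        ring
      rw [Finset.sum_congr rfl this, ← Finset.mul_sum,
        rank_sum (S'.filter (fun s => ¬ t < s)) (fun c => (ε^m * q)^c), hBcard]
      unfold qnum
      ring
    rw [hTsum, hBsum, Finset.prod_range_succ]
    have hKle : K ≤ m + 1 := by
      rw [← hTcard]
      calc (S'.filter (fun s => t < s)).card ≤ S'.card := card_filter_le _ _
        _ = m + 1 := hS'
    have := key_alg ε q hsq m K hKle
    calc ε ^ K * q^(m+1) * qnum K (ε^m * q) * (∏ j ∈ range m, qnum (j+1) (ε ^ j * q))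
          + ε ^ K * (ε^m*q)^K * qnum (m+1-K) (ε^m * q) * (∏ j ∈ range m, qnum (j+1) (ε ^ j * q))
        = (ε ^ K * (q ^ (m+1) * qnum K (ε^m * q) + (ε^m * q) ^ K * qnum (m+1-K) (ε^m * q)))
            * (∏ j ∈ range m, qnum (j+1) (ε ^ j * q)) := by ring
      _ = ((ε^(m+1) * q) ^ K * qnum (m+1) (ε^m * q)) * (∏ j ∈ range m, qnum (j+1) (ε ^ j * q)) := by
          rw [this]
      _ = (ε^(m+1) * q) ^ K * ((∏ j ∈ range m, qnum (j+1) (ε ^ j * q)) * qnum (m+1) (ε^m * q)) := by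
          ring

lemma mahonian (ε q : ℂ) (hsq : ε * ε = 1) (m : ℕ) (S : Finset ℕ) (hS : S.card = m) :
    ∑ w ∈ WS m S, ε ^ winv m (wext w) * q ^ wmaj m (wext w)
      = ∏ j ∈ range m, qnum (j+1) (ε ^ j * q) := by
  cases m with
  | zero =>
    have hset : WS 0 S = {fun i => i.elim0} := by
      ext w
      simp only [mem_WS, Finset.mem_singleton]
      constructor
      · intro _
        funext i
        exact i.elim0
      · rintro rfl
        exact ⟨fun i => i.elim0, fun a _ _ => a.elim0⟩
    rw [hset, Finset.sum_singleton]
    simp [winv, wmaj]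
  | succ m =>
    have hmaps : ∀ w ∈ WS (m+1) S, w (Fin.last m) ∈ S :=
      fun w hw => (mem_WS.1 hw).1 _
    rw [← Finset.sum_fiberwise_of_maps_to hmaps]
    have : ∀ t ∈ S,
        ∑ w ∈ (WS (m+1) S).filter (fun w => w (Fin.last m) = t),
            ε ^ winv (m+1) (wext w) * q ^ wmaj (m+1) (wext w)
        = (∏ j ∈ range m, qnum (j+1) (ε ^ j * q))
            * (ε ^ m * q) ^ ((S.filter (fun u => t < u)).card) := by
      intro t ht
      rw [mahonian_refined ε q hsq m S hS t ht]
      ring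
    rw [Finset.sum_congr rfl this, ← Finset.mul_sum,
      rank_sum S (fun c => (ε^m * q)^c), hS, Finset.prod_range_succ]
    congr 1

/-! ### Colored part -/

def zext {n r : ℕ} (z : Fin n → Fin r) : ℕ → ℕ := fun i => if h : i < n then (z ⟨i, h⟩ : ℕ) else 0

def ccol (n : ℕ) (z : ℕ → ℕ) : ℕ → ℕ := fun i => if i = n - 1 then 0 else z i

def cmaj (n : ℕ) (w c : ℕ → ℕ) : ℕ :=
  ∑ i ∈ range (n - 1), if Flt (w (i+1), c (i+1)) (w i, c i) then i + 1 else 0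

def chiw (w : ℕ → ℕ) : ℕ → ℕ := fun i => if w (i+1) < w i then 1 else 0

def dv (w c : ℕ → ℕ) (i : ℕ) : ℕ := if Flt (w (i+1), c (i+1)) (w i, c i) then 1 else 0

def bv (r : ℕ) (w c : ℕ → ℕ) (i : ℕ) : ℕ := c i + r * dv w c i - c (i+1)

lemma zext_lt {n r : ℕ} (hr : 1 ≤ r) (z : Fin n → Fin r) (i : ℕ) : zext z i < r := by
  unfold zext
  split
  · exact (z _).isLt
  · omega

lemma cmaj_eq (n : ℕ) (w c : ℕ → ℕ) :
    cmaj n w c = ∑ i ∈ range (n-1), (i+1) * dv w c i := by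
  unfold cmaj dv
  apply Finset.sum_congr rfl
  intro i _
  split <;> simp

lemma wmaj_eq_chi (n : ℕ) (w : ℕ → ℕ) :
    wmaj n w = ∑ i ∈ range (n-1), (i+1) * chiw w i := by
  unfold wmaj chiw
  apply Finset.sum_congr rfl
  intro i _
  split <;> simp

/-- bounds for the `b`-statistic -/
lemma bv_bounds {m r : ℕ} (hr : 1 ≤ r) (w : ℕ → ℕ) (y : Fin m → Fin r) (i : ℕ) :
    chiw w i ≤ bv r w (zext y) i ∧ bv r w (zext y) i ≤ r - 1 + chiw w i ∧
      zext y (i+1) ≤ zext y i + r * dv w (zext y) i := by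
  have h1 : zext y i < r := zext_lt hr y i
  have h2 : zext y (i+1) < r := zext_lt hr y (i+1)
  unfold bv dv chiw
  by_cases hf : Flt (w (i+1), zext y (i+1)) (w i, zext y i)
  · rw [if_pos hf]
    have hf' : zext y i < zext y (i+1) ∨ (zext y (i+1) = zext y i ∧ w (i+1) < w i) := hf
    rcases hf' with h | ⟨h, hw⟩
    · split <;> omega
    · rw [if_pos hw]; omega
  · rw [if_neg hf]
    have hf' : ¬ (zext y i < zext y (i+1) ∨ (zext y (i+1) = zext y i ∧ w (i+1) < w i)) := hf
    push_neg at hf'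
    obtain ⟨hle, him⟩ := hf'
    by_cases hw : w (i+1) < w i
    · rw [if_pos hw]
      have hne : zext y (i+1) ≠ zext y i := by
        intro hc
        have := him hc
        omega
      omega
    · rw [if_neg hw]; omega

/-- the per-index reconstruction lemma -/
lemma bv_of_mod {r : ℕ} (hr : 1 ≤ r) (w c : ℕ → ℕ) (i s : ℕ)
    (hχle : chiw w i ≤ s) (hub : s ≤ r - 1 + chiw w i)
    (hc1 : c (i+1) < r) (heq : c i = (s + c (i+1)) % r) :
    c i + r * dv w c i - c (i+1) = s := by
  have hχ : chiw w i ≤ 1 := by unfold chiw; split <;> omega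
  have hs : s ≤ r := by omega
  by_cases hcase : s + c (i+1) < r
  · have hci : c i = s + c (i+1) := by rw [heq, Nat.mod_eq_of_lt hcase]
    have hnf : ¬ Flt (w (i+1), c (i+1)) (w i, c i) := by
      intro hf
      have hf' : c i < c (i+1) ∨ (c (i+1) = c i ∧ w (i+1) < w i) := hf
      rcases hf' with h | ⟨h, hw⟩
      · omega
      · have hs0 : s = 0 := by omega
        have : chiw w i = 1 := by unfold chiw; rw [if_pos hw]
        omega
    unfold dv
    rw [if_neg hnf]
    omega
  · push_neg at hcase
    have hlt2 : s + c (i+1) < 2 * r := by omega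
    have hci : c i = s + c (i+1) - r := by
      rw [heq, Nat.mod_eq_sub_mod hcase, Nat.mod_eq_of_lt (by omega)]
    have hf : Flt (w (i+1), c (i+1)) (w i, c i) := by
      show c i < c (i+1) ∨ (c (i+1) = c i ∧ w (i+1) < w i)
      rcases Nat.lt_or_ge (c i) (c (i+1)) with h | h
      · exact Or.inl h
      · have hceq : c (i+1) = c i := by omega
        have hsr : s = r := by omega
        have hwd : w (i+1) < w i := by
          by_contra hw
          have : chiw w i = 0 := by unfold chiw; rw [if_neg hw]
          omega
        exact Or.inr ⟨hceq, hwd⟩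
    unfold dv
    rw [if_pos hf]
    omega

/-- telescoping of the `b`-statistic -/
lemma bv_telescope {m r : ℕ} (hr : 1 ≤ r) (w : ℕ → ℕ) (y : Fin m → Fin r) :
    ∀ k i, i + k = m →
      ∑ j ∈ Finset.Ico i m, bv r w (zext y) j
        = zext y i + r * ∑ j ∈ Finset.Ico i m, dv w (zext y) j := by
  intro k
  induction k with
  | zero =>
    intro i hi
    have him : i = m := by omega
    subst him
    rw [Finset.Ico_self, Finset.sum_empty, Finset.sum_empty]
    unfold zext
    rw [dif_neg (lt_irrefl _)]
    omega
  | succ k ihk =>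
    intro i hi
    have him : i < m := by omega
    rw [Finset.sum_eq_sum_Ico_succ_bot him, Finset.sum_eq_sum_Ico_succ_bot him,
      ihk (i+1) (by omega)]
    have hb := (bv_bounds hr w y i).2.2
    have hbv : bv r w (zext y) i + zext y (i+1) = zext y i + r * dv w (zext y) i := by
      unfold bv
      omega
    have hdist : r * (dv w (zext y) i + ∑ j ∈ Finset.Ico (i+1) m, dv w (zext y) j)
        = r * dv w (zext y) i + r * ∑ j ∈ Finset.Ico (i+1) m, dv w (zext y) j :=
      Nat.mul_add r _ _
    omega

/-- the weighted telescoping statistic identity -/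
lemma stat_eq {m r : ℕ} (hr : 1 ≤ r) (w : ℕ → ℕ) (y : Fin m → Fin r) :
    r * cmaj (m+1) w (zext y) + ∑ i ∈ range m, zext y i
      = ∑ i ∈ range m, (i+1) * bv r w (zext y) i := by
  have key : ∀ i < m, (i+1) * bv r w (zext y) i + (i+1) * zext y (i+1)
      = (i+1) * zext y i + (i+1) * (r * dv w (zext y) i) := by
    intro i _
    have hb := (bv_bounds hr w y i).2.2
    rw [← Nat.mul_add, ← Nat.mul_add]
    congr 1
    unfold bv
    omega
  have h1 : ∑ i ∈ range m, (i+1) * bv r w (zext y) i + ∑ i ∈ range m, (i+1) * zext y (i+1)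
      = ∑ i ∈ range m, (i+1) * zext y i + ∑ i ∈ range m, (i+1) * (r * dv w (zext y) i) := by
    rw [← Finset.sum_add_distrib, ← Finset.sum_add_distrib]
    apply Finset.sum_congr rfl
    intro i hi
    exact key i (mem_range.1 hi)
  have h2 : ∑ i ∈ range m, (i+1) * zext y (i+1) + ∑ i ∈ range m, zext y i
      = ∑ i ∈ range m, (i+1) * zext y i := by
    have hshift : ∑ i ∈ range (m+1), i * zext y i
        = ∑ i ∈ range m, (i+1) * zext y (i+1) + 0 * zext y 0 :=
      Finset.sum_range_succ' (fun i => i * zext y i) m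
    have hlast : ∑ i ∈ range (m+1), i * zext y i = ∑ i ∈ range m, i * zext y i + m * zext y m :=
      Finset.sum_range_succ _ m
    have hym : zext y m = 0 := by unfold zext; rw [dif_neg (lt_irrefl _)]
    rw [hym, Nat.mul_zero, Nat.add_zero] at hlast
    rw [Nat.zero_mul, Nat.add_zero] at hshift
    have : ∑ i ∈ range m, (i+1) * zext y (i+1) = ∑ i ∈ range m, i * zext y i := by omega
    rw [this, ← Finset.sum_add_distrib]
    apply Finset.sum_congr rfl
    intro i _
    ring
  have h3 : ∑ i ∈ range m, (i+1) * (r * dv w (zext y) i) = r * cmaj (m+1) w (zext y) := by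
    rw [cmaj_eq, Finset.mul_sum]
    simp only [Nat.add_sub_cancel]
    apply Finset.sum_congr rfl
    intro i _
    ring
  omega

lemma mod_fix (r a : ℕ) (hr : 1 ≤ r) : (a + (r - a % r) % r) % r = 0 := by
  have h1 : a % r < r := Nat.mod_lt a (by omega)
  by_cases h0 : a % r = 0
  · rw [h0, Nat.sub_zero, Nat.mod_self, Nat.add_zero]
    exact h0
  · have h2 : (r - a % r) % r = r - a % r := Nat.mod_eq_of_lt (by omega)
    have h3 : a % r + (r - a % r) = r := by omega
    calc (a + (r - a % r) % r) % r
        = (a % r + ((r - a % r) % r) % r) % r := Nat.add_mod _ _ _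
      _ = (a % r + (r - a % r)) % r := by
          rw [Nat.mod_mod_of_dvd _ (dvd_refl r), h2]
      _ = r % r := by rw [h3]
      _ = 0 := Nat.mod_self r

lemma last_color (r a b : ℕ) (hr : 1 ≤ r) (hb : b < r) (h : (a + b) % r = 0) :
    b = (r - a % r) % r := by
  have h1 : a % r < r := Nat.mod_lt a (by omega)
  have h2 : (a % r + b) % r = 0 := by
    calc (a % r + b) % r = (a % r % r + b % r) % r := Nat.add_mod _ _ _
      _ = (a % r + b % r) % r := by rw [Nat.mod_mod_of_dvd _ (dvd_refl r)]
      _ = (a + b) % r := (Nat.add_mod _ _ _).symm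
      _ = 0 := h
  have hdvd : r ∣ (a % r + b) := Nat.dvd_of_mod_eq_zero h2
  obtain ⟨k, hk⟩ := hdvd
  have hk2 : k < 2 := by
    by_contra hk2
    push_neg at hk2
    have : 2 * r ≤ r * k := by
      calc 2 * r = r * 2 := by ring
        _ ≤ r * k := Nat.mul_le_mul_left r hk2
    omega
  interval_cases k
  · -- a % r + b = 0
    have hb0 : b = 0 := by omega
    have ha0 : a % r = 0 := by omega
    rw [hb0, ha0, Nat.sub_zero, Nat.mod_self]
  · -- a % r + b = r
    by_cases h0 : a % r = 0
    · exfalso; omega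
    · rw [Nat.mod_eq_of_lt (by omega : r - a % r < r)]
      omega

def lastcF (r m : ℕ) (hr : 0 < r) (y : Fin m → Fin r) : Fin r :=
  ⟨(r - (∑ j, (y j : ℕ)) % r) % r, Nat.mod_lt _ hr⟩

def phiF (r m : ℕ) (hr : 0 < r) (w : ℕ → ℕ) (y : Fin m → Fin r) : Fin m → Fin r :=
  fun i => ⟨(bv r w (zext y) i.1 - chiw w i.1) % r, Nat.mod_lt _ hr⟩

def psiF (r m : ℕ) (hr : 0 < r) (w : ℕ → ℕ) (h : Fin m → Fin r) : Fin m → Fin r :=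
  fun i => ⟨(∑ j ∈ Finset.Ico i.1 m, (zext h j + chiw w j)) % r, Nat.mod_lt _ hr⟩

lemma zext_apply {n r : ℕ} (z : Fin n → Fin r) {i : ℕ} (h : i < n) :
    zext z i = (z ⟨i, h⟩ : ℕ) := dif_pos h

lemma phiF_val (r m : ℕ) (hr : 0 < r) (w : ℕ → ℕ) (y : Fin m → Fin r) (i : Fin m) :
    (phiF r m hr w y i : ℕ) = bv r w (zext y) i.1 - chiw w i.1 := by
  show (bv r w (zext y) i.1 - chiw w i.1) % r = _
  apply Nat.mod_eq_of_lt
  have hb := bv_bounds (r := r) (by omega) w y i.1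
  omega

lemma psiF_val (r m : ℕ) (hr : 0 < r) (w : ℕ → ℕ) (h : Fin m → Fin r) (i : Fin m) :
    (psiF r m hr w h i : ℕ) = (∑ j ∈ Finset.Ico i.1 m, (zext h j + chiw w j)) % r := rfl

lemma zext_phiF (r m : ℕ) (hr : 0 < r) (w : ℕ → ℕ) (y : Fin m → Fin r) {i : ℕ} (him : i < m) :
    zext (phiF r m hr w y) i = bv r w (zext y) i - chiw w i := by
  rw [zext_apply _ him, phiF_val]

lemma zext_psiF (r m : ℕ) (hr : 0 < r) (w : ℕ → ℕ) (h : Fin m → Fin r) (i : ℕ) :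
    zext (psiF r m hr w h) i = (∑ j ∈ Finset.Ico i m, (zext h j + chiw w j)) % r := by
  by_cases him : i < m
  · rw [zext_apply _ him, psiF_val]
  · unfold zext
    rw [dif_neg him, Finset.Ico_eq_empty (by omega), Finset.sum_empty, Nat.zero_mod]

lemma color_sum (r m : ℕ) (hr : 1 ≤ r) (w : ℕ → ℕ) (q : ℂ) :
    ∑ z ∈ (univ : Finset (Fin (m+1) → Fin r)).filter
        (fun z => (∑ i, (z i : ℕ)) % r = 0),
      q ^ (r * cmaj (m+1) w (ccol (m+1) (zext z)) + ∑ i ∈ range m, zext z i)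
    = q ^ wmaj (m+1) w * ∏ i ∈ range m, qnum r (q ^ (i+1)) := by
  have hrpos : 0 < r := by omega
  have hccol : ∀ z : Fin (m+1) → Fin r, ccol (m+1) (zext z) = zext (z ∘ Fin.castSucc) := by
    intro z
    funext i
    unfold ccol zext
    simp only [Nat.add_sub_cancel]
    by_cases h1 : i = m
    · subst h1
      rw [if_pos rfl, dif_neg (lt_irrefl _)]
    · rw [if_neg h1]
      by_cases h2 : i < m
      · rw [dif_pos (by omega : i < m + 1), dif_pos h2]
        rfl
      · rw [dif_neg (by omega : ¬ i < m + 1), dif_neg h2]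
  have hsumz : ∀ z : Fin (m+1) → Fin r,
      ∑ i ∈ range m, zext z i = ∑ i ∈ range m, zext (z ∘ Fin.castSucc) i := by
    intro z
    apply Finset.sum_congr rfl
    intro i hi
    have him := mem_range.1 hi
    unfold zext
    rw [dif_pos (by omega : i < m + 1), dif_pos him]
    rfl
  -- Step B : drop the determined last color
  have stepB :
      ∑ z ∈ (univ : Finset (Fin (m+1) → Fin r)).filter
          (fun z => (∑ i, (z i : ℕ)) % r = 0),
        q ^ (r * cmaj (m+1) w (ccol (m+1) (zext z)) + ∑ i ∈ range m, zext z i)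
      = ∑ y ∈ (univ : Finset (Fin m → Fin r)),
          q ^ (r * cmaj (m+1) w (zext y) + ∑ i ∈ range m, zext y i) := by
    refine Finset.sum_nbij' (i := fun z => z ∘ Fin.castSucc)
      (j := fun y => Fin.snoc y (lastcF r m hrpos y)) ?_ ?_ ?_ ?_ ?_
    · intro z _
      exact mem_univ _
    · intro y _
      rw [mem_filter]
      refine ⟨mem_univ _, ?_⟩
      rw [Fin.sum_univ_castSucc]
      simp only [Fin.snoc_castSucc, Fin.snoc_last]
      exact mod_fix r _ hr
    · intro z hz
      have hcond := (mem_filter.1 hz).2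
      funext i
      rcases Fin.eq_castSucc_or_eq_last i with ⟨i', rfl⟩ | rfl
      · simp [Fin.snoc_castSucc]
      · simp only [Fin.snoc_last]
        apply Fin.ext
        show ((r - (∑ j, ((z (Fin.castSucc j)) : ℕ)) % r) % r) = (z (Fin.last m) : ℕ)
        refine (last_color r _ _ hr (z (Fin.last m)).isLt ?_).symm
        rw [← Fin.sum_univ_castSucc (fun i => ((z i : ℕ)))]
        exact hcond
    · intro y _
      funext i
      simp [Fin.snoc_castSucc]
    · intro z _
      rw [hccol z, hsumz z]
  rw [stepB]
  -- Step C : the `b`-code bijection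
  have stepC :
      ∑ y ∈ (univ : Finset (Fin m → Fin r)),
          q ^ (r * cmaj (m+1) w (zext y) + ∑ i ∈ range m, zext y i)
      = ∑ h ∈ (univ : Finset (Fin m → Fin r)),
          q ^ (∑ i ∈ range m, (i+1) * (zext h i + chiw w i)) := by
    refine Finset.sum_nbij' (i := phiF r m hrpos w) (j := psiF r m hrpos w) ?_ ?_ ?_ ?_ ?_
    · intro y _; exact mem_univ _
    · intro h _; exact mem_univ _
    · -- psiF (phiF y) = y
      intro y _
      funext i
      apply Fin.ext
      rw [psiF_val]
      have hsum : ∑ j ∈ Finset.Ico i.1 m, (zext (phiF r m hrpos w y) j + chiw w j)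
          = ∑ j ∈ Finset.Ico i.1 m, bv r w (zext y) j := by
        apply Finset.sum_congr rfl
        intro j hj
        have hjm : j < m := (Finset.mem_Ico.1 hj).2
        rw [zext_phiF r m hrpos w y hjm]
        have hb := (bv_bounds (r := r) (by omega) w y j).1
        omega
      rw [hsum, bv_telescope (by omega) w y (m - i.1) i.1 (by omega),
        Nat.add_mul_mod_self_left, Nat.mod_eq_of_lt (zext_lt (by omega) y i.1),
        zext_apply y i.isLt]
    · -- phiF (psiF h) = h
      intro h _
      funext i
      apply Fin.ext
      rw [phiF_val]
      have him := i.isLt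
      have heq : zext (psiF r m hrpos w h) i.1
          = ((zext h i.1 + chiw w i.1) + zext (psiF r m hrpos w h) (i.1+1)) % r := by
        rw [zext_psiF, zext_psiF, Finset.sum_eq_sum_Ico_succ_bot him]
        exact ((Nat.mod_modEq _ r).add_left _).symm
      have hχ : chiw w i.1 ≤ 1 := by unfold chiw; split <;> omega
      have hzlt := zext_lt (r := r) (by omega) h i.1
      have hkey := bv_of_mod (by omega : 1 ≤ r) w (zext (psiF r m hrpos w h)) i.1
        (zext h i.1 + chiw w i.1) (by omega) (by omega)
        (zext_lt (by omega) _ _) heq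
      unfold bv at hkey
      have hvi : zext h i.1 = (h i : ℕ) := by rw [zext_apply h him]
      unfold bv
      omega
    · intro y _
      congr 1
      rw [stat_eq (by omega : 1 ≤ r) w y]
      apply Finset.sum_congr rfl
      intro i hi
      have him := mem_range.1 hi
      rw [zext_phiF r m hrpos w y him]
      have hb := (bv_bounds (r := r) (by omega) w y i).1
      congr 1
      omega
  rw [stepC]
  -- final summation
  have hfactor : ∀ h : Fin m → Fin r,
      q ^ (∑ i ∈ range m, (i+1) * (zext h i + chiw w i))
        = q ^ wmaj (m+1) w * ∏ i ∈ range m, (q ^ (i+1)) ^ (zext h i) := by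
    intro h
    have hsplit : ∑ i ∈ range m, (i+1) * (zext h i + chiw w i)
        = (∑ i ∈ range m, (i+1) * chiw w i) + ∑ i ∈ range m, (i+1) * zext h i := by
      rw [← Finset.sum_add_distrib]
      apply Finset.sum_congr rfl
      intro i _
      ring
    rw [hsplit, pow_add]
    congr 1
    · rw [wmaj_eq_chi]
      simp only [Nat.add_sub_cancel]
    · rw [← Finset.prod_pow_eq_pow_sum]
      apply Finset.prod_congr rfl
      intro i _
      rw [← pow_mul]
  rw [Finset.sum_congr rfl (fun h _ => hfactor h), ← Finset.mul_sum]
  congr 1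
  have hswap : ∀ h : Fin m → Fin r,
      ∏ i ∈ range m, (q ^ (i+1)) ^ (zext h i) = ∏ i : Fin m, (q ^ ((i : ℕ)+1)) ^ ((h i : ℕ)) := by
    intro h
    rw [← Fin.prod_univ_eq_prod_range (fun i => (q ^ (i+1)) ^ (zext h i)) m]
    apply Finset.prod_congr rfl
    intro i _
    rw [zext_apply h i.isLt]
  rw [Finset.sum_congr rfl (fun h _ => hswap h)]
  rw [← Fintype.prod_sum (f := fun (i : Fin m) (v : Fin r) => (q ^ ((i : ℕ)+1)) ^ ((v : ℕ)))]
  rw [← Fin.prod_univ_eq_prod_range (fun i => qnum r (q ^ (i+1))) m]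
  apply Finset.prod_congr rfl
  intro i _
  unfold qnum
  rw [← Fin.sum_univ_eq_sum_range (fun c => (q ^ ((i : ℕ)+1)) ^ c) r]

/-! ### translation -/

lemma window_length {r n : ℕ} (π : GP r n) : (window π).length = n := by
  simp [window]

lemma windowD_length {r n : ℕ} (π : GP r n) : (windowD π).length = n := by
  simp [windowD]

lemma windowD_getD {r n : ℕ} (π : GP r n) {j : ℕ} (hj : j < n) :
    (windowD π).getD j (0, 0)
      = ((π.1 ⟨j, hj⟩ : ℕ) + 1, if j = n - 1 then 0 else (π.2 ⟨j, hj⟩ : ℕ)) := by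
  unfold windowD
  rw [List.getD_eq_getElem _ _ (by simpa using hj)]
  simp

lemma absList_window_getD {r n : ℕ} (π : GP r n) {j : ℕ} (hj : j < n) :
    (absList (window π)).getD j 0 = (π.1 ⟨j, hj⟩ : ℕ) + 1 := by
  unfold absList window
  rw [List.map_map, List.getD_eq_getElem _ _ (by simpa using hj)]
  simp

lemma colSum_window {r n : ℕ} (π : GP r n) : colSum (window π) = ∑ i, (π.2 i : ℕ) := by
  unfold colSum window
  rw [List.map_map, Fin.sum_univ_def]
  rfl

lemma invNum_window {n r : ℕ} (π : GP r n) :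
    invNum (absList (window π)) = winv n (wext (fun i => (π.1 i : ℕ) + 1)) := by
  unfold invNum winv
  have hlen : (absList (window π)).length = n := by
    unfold absList
    rw [List.length_map, window_length]
  rw [hlen]
  apply Finset.sum_congr rfl
  intro i hi
  apply Finset.sum_congr rfl
  intro j hj
  have hi' := mem_range.1 hi
  have hj' := mem_range.1 hj
  rw [absList_window_getD π hi', absList_window_getD π hj']
  unfold wext
  rw [dif_pos hi', dif_pos hj']

lemma colSum_map {n : ℕ} (f : Fin n → ℕ × ℕ) :
    colSum ((List.finRange n).map f) = ∑ i, (f i).2 := by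
  unfold colSum
  rw [List.map_map, ← Fin.sum_univ_def (Prod.snd ∘ f)]
  rfl

lemma fmaj_windowD {m r : ℕ} (π : GP r (m+1)) :
    fmaj r (windowD π)
      = r * cmaj (m+1) (wext (fun i => (π.1 i : ℕ) + 1)) (ccol (m+1) (zext π.2))
        + ∑ i ∈ range m, zext π.2 i := by
  unfold fmaj
  congr 1
  · -- majF part
    congr 1
    unfold majF cmaj
    rw [windowD_length]
    apply Finset.sum_congr rfl
    intro i hi
    have hi' := mem_range.1 hi
    have h1 : i < m + 1 := by omega
    have h2 : i + 1 < m + 1 := by omega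
    rw [windowD_getD π h1, windowD_getD π h2]
    have hv1 : wext (fun i : Fin (m+1) => (π.1 i : ℕ) + 1) i = (π.1 ⟨i, h1⟩ : ℕ) + 1 := by
      unfold wext; rw [dif_pos h1]
    have hv2 : wext (fun i : Fin (m+1) => (π.1 i : ℕ) + 1) (i+1) = (π.1 ⟨i+1, h2⟩ : ℕ) + 1 := by
      unfold wext; rw [dif_pos h2]
    have hc1 : ccol (m+1) (zext π.2) i = if i = m + 1 - 1 then 0 else (π.2 ⟨i, h1⟩ : ℕ) := by
      unfold ccol zext
      rw [dif_pos h1]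
    have hc2 : ccol (m+1) (zext π.2) (i+1)
        = if i + 1 = m + 1 - 1 then 0 else (π.2 ⟨i+1, h2⟩ : ℕ) := by
      unfold ccol zext
      rw [dif_pos h2]
    rw [hv1, hv2, hc1, hc2]
  · -- colSum part
    unfold windowD
    rw [colSum_map]
    show ∑ i : Fin (m+1), (if (i : ℕ) = m + 1 - 1 then 0 else (π.2 i : ℕ)) = _
    rw [Fin.sum_univ_castSucc]
    have hlast : (if ((Fin.last m : Fin (m+1)) : ℕ) = m + 1 - 1 then 0
        else (π.2 (Fin.last m) : ℕ)) = 0 := by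
      simp
    rw [hlast, add_zero, ← Fin.sum_univ_eq_sum_range (fun i => zext π.2 i) m]
    apply Finset.sum_congr rfl
    intro i _
    have hlt : ((Fin.castSucc i : Fin (m+1)) : ℕ) < m := by simpa using i.isLt
    rw [if_neg (by omega), zext_apply π.2 (by have := i.isLt; omega : (i : ℕ) < m + 1)]
    rfl


/-- the signed `Dmaj` generating function over `G*_{r,n}`. -/
theorem Dmaj_total (r n : ℕ) (ε q : ℂ)
    (hr : 1 ≤ r) (hn : 1 ≤ n) (hε : ε = 1 ∨ ε = -1) :
    ∑ π ∈ Finset.univ.filter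
        (fun π : GP r n => colSum (window π) % r = 0),
      ε ^ invNum (absList (window π)) * q ^ fmaj r (windowD π)
    = (∏ j ∈ Finset.Icc 1 (n - 1), qnum (j * r) (ε ^ (j - 1) * q)) *
        qnum n (ε ^ (n - 1) * q) := by
  have hsq : ε * ε = 1 := by rcases hε with rfl | rfl <;> norm_num
  obtain ⟨m, rfl⟩ : ∃ m, n = m + 1 := ⟨n - 1, by omega⟩
  simp only [Nat.add_sub_cancel]
  -- the underlying word of a permutation
  set W : Equiv.Perm (Fin (m+1)) → (ℕ → ℕ) :=
    fun σ => wext (fun i : Fin (m+1) => (σ i : ℕ) + 1) with hW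
  set C : ℂ := ∏ i ∈ range m, qnum r (q ^ (i+1)) with hC
  have step1 :
      ∑ π ∈ Finset.univ.filter
          (fun π : GP r (m+1) => colSum (window π) % r = 0),
        ε ^ invNum (absList (window π)) * q ^ fmaj r (windowD π)
      = ∑ σ : Equiv.Perm (Fin (m+1)),
          ε ^ winv (m+1) (W σ) * (q ^ wmaj (m+1) (W σ) * C) := by
    rw [Finset.sum_filter, Fintype.sum_prod_type]
    apply Finset.sum_congr rfl
    intro σ _
    have hinner : ∀ z : Fin (m+1) → Fin r,
        (if colSum (window ((σ, z) : GP r (m+1))) % r = 0 then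
            ε ^ invNum (absList (window ((σ, z) : GP r (m+1))))
              * q ^ fmaj r (windowD ((σ, z) : GP r (m+1)))
          else 0)
        = (if (∑ i, (z i : ℕ)) % r = 0 then
            ε ^ winv (m+1) (W σ) *
              q ^ (r * cmaj (m+1) (W σ) (ccol (m+1) (zext z)) + ∑ i ∈ range m, zext z i)
          else 0) := by
      intro z
      rw [colSum_window, invNum_window, fmaj_windowD]
    rw [Finset.sum_congr rfl (fun z _ => hinner z), ← Finset.sum_filter, ← Finset.mul_sum,
      color_sum r m hr (W σ) q]
  rw [step1]
  have step2 :
      ∑ σ : Equiv.Perm (Fin (m+1)), ε ^ winv (m+1) (W σ) * (q ^ wmaj (m+1) (W σ) * C)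
      = (∑ σ : Equiv.Perm (Fin (m+1)), ε ^ winv (m+1) (W σ) * q ^ wmaj (m+1) (W σ)) * C := by
    rw [Finset.sum_mul]
    apply Finset.sum_congr rfl
    intro σ _
    ring
  rw [step2]
  have hperm :
      ∑ σ : Equiv.Perm (Fin (m+1)), ε ^ winv (m+1) (W σ) * q ^ wmaj (m+1) (W σ)
      = ∑ w ∈ WS (m+1) (Finset.Icc 1 (m+1)),
          ε ^ winv (m+1) (wext w) * q ^ wmaj (m+1) (wext w) := by
    apply Finset.sum_nbij (fun σ => (fun i : Fin (m+1) => (σ i : ℕ) + 1))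
    · intro σ _
      rw [mem_WS]
      constructor
      · intro i
        rw [Finset.mem_Icc]
        have := (σ i).isLt
        omega
      · intro a b hab
        have hab' : (σ a : ℕ) + 1 = (σ b : ℕ) + 1 := hab
        exact σ.injective (Fin.ext (by omega))
    · intro σ _ τ _ h
      have h' : ∀ i, (σ i : ℕ) + 1 = (τ i : ℕ) + 1 := fun i => congrFun h i
      apply Equiv.ext
      intro i
      exact Fin.ext (by have := h' i; omega)
    · intro w hw
      rw [Finset.mem_coe, mem_WS] at hw
      obtain ⟨hmem, hinj⟩ := hw
      have hws : ∀ i, 1 ≤ w i ∧ w i ≤ m + 1 := fun i => Finset.mem_Icc.1 (hmem i)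
      have hg : Function.Injective (fun i : Fin (m+1) =>
          (⟨w i - 1, by have := hws i; omega⟩ : Fin (m+1))) := by
        intro a b hab
        apply hinj
        have h1 := hws a
        have h2 := hws b
        have : w a - 1 = w b - 1 := congrArg Fin.val hab
        omega
      refine ⟨Equiv.ofBijective _ ((Finite.injective_iff_bijective).1 hg), ?_, ?_⟩
      · exact Finset.mem_coe.2 (mem_univ _)
      · funext i
        show ((⟨w i - 1, _⟩ : Fin (m+1)) : ℕ) + 1 = w i
        have := hws i
        simp only []
        omega
    · intro σ _
      rfl
  rw [hperm, mahonian ε q hsq (m+1) (Finset.Icc 1 (m+1)) (by rw [Nat.card_Icc]; omega)]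
  -- final algebra
  have hIcc : ∏ j ∈ Finset.Icc 1 m, qnum (j * r) (ε ^ (j-1) * q)
      = ∏ i ∈ range m, qnum ((i+1) * r) (ε ^ i * q) := by
    refine Finset.prod_nbij' (i := fun j => j - 1) (j := fun i => i + 1) ?_ ?_ ?_ ?_ ?_
    · intro j hj
      simp only [mem_range]
      have := Finset.mem_Icc.1 hj
      omega
    · intro i hi
      simp only [Finset.mem_Icc]
      have := mem_range.1 hi
      omega
    · intro j hj
      have := Finset.mem_Icc.1 hj
      omega
    · intro i _
      omega
    · intro j hj
      have := Finset.mem_Icc.1 hj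
      have hj1 : j - 1 + 1 = j := by omega
      rw [hj1]
  have hmerge : ∀ i ∈ range m, qnum ((i+1) * r) (ε ^ i * q)
      = qnum (i+1) (ε ^ i * q) * qnum r (q ^ (i+1)) := by
    intro i _
    rw [qnum_mul (i+1) r (ε ^ i * q)]
    congr 2
    rw [mul_pow, ← pow_mul, epow_even ε hsq (i * (i+1)) (Nat.even_mul_succ_self i), one_mul]
  rw [hIcc, Finset.prod_congr rfl hmerge, Finset.prod_mul_distrib, Finset.prod_range_succ]
  rw [← hC]
  ring
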